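/- arXiv:math/0506138 — 3 statements merged into one kernel-verified Lean document; each statement's English description precedes it below -/
import Mathlib

section
/- For any almost periodic sequence f on ℤ, the mean value ⟨f⟩ = lim_{N→∞} (1/(2N+1)) ∑_{k=n₀-N}^{n₀+N} f(k) exists and is independent of the base point n₀ ∈ ℤ. -/
open scoped UniformConvergence

def Translates (f : ℤ → ℂ) : Set (ℤ →ᵤ ℂ) :=
  {g | ∃ k : ℤ, g = UniformFun.ofFun (fun n => f (n + k))}

def AlmostPeriodicSeq (f : ℤ → ℂ) : Prop :=
  IsCompact (closure (Translates f))

namespace APProof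

noncomputable def S (f : ℤ → ℂ) (a : ℤ) (K : ℕ) : ℂ :=
  ∑ k ∈ Finset.Icc (a - (K:ℤ)) (a + (K:ℤ)), f k

noncomputable def A (f : ℤ → ℂ) (a : ℤ) (K : ℕ) : ℂ :=
  (2 * (K:ℂ) + 1)⁻¹ * S f a K

lemma tri3 (x y z : ℂ) : ‖x - z‖ ≤ ‖x - y‖ + ‖y - z‖ := by
  simpa [dist_eq_norm] using dist_triangle x y z

lemma density (f : ℤ → ℂ) (hf : AlmostPeriodicSeq f) {ε : ℝ} (hε : 0 < ε) :
    ∃ L : ℕ, ∀ a : ℤ, ∃ τ : ℤ, (a - τ).natAbs ≤ L ∧ ∀ n, ‖f (n + τ) - f n‖ ≤ ε := by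
  have hTB : TotallyBounded (Translates f) :=
    (hf.totallyBounded).subset subset_closure
  obtain ⟨t, hts, htfin, hcov⟩ := totallyBounded_iff_subset.mp hTB
    (UniformFun.gen ℤ ℂ {p : ℂ × ℂ | dist p.1 p.2 < ε})
    ((UniformFun.hasBasis_uniformity ℤ ℂ).mem_of_mem (Metric.dist_mem_uniformity hε))
  choose! k hk using fun y (hy : y ∈ t) => hts hy
  refine ⟨htfin.toFinset.sup (fun y => (k y).natAbs), fun a => ?_⟩
  have hmem : UniformFun.ofFun (fun n => f (n + a)) ∈ Translates f := ⟨a, rfl⟩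
  obtain ⟨y, hy, hclose⟩ := Set.mem_iUnion₂.mp (hcov hmem)
  have hkey : ∀ n : ℤ, dist (f (n + a)) (f (n + k y)) < ε := by
    intro n
    have := hclose
    rw [hk y hy] at this
    exact this n
  refine ⟨a - k y, ?_, fun n => ?_⟩
  · have : (a - (a - k y)).natAbs = (k y).natAbs := by omega
    rw [this]
    exact Finset.le_sup (f := fun y => (k y).natAbs) (htfin.mem_toFinset.mpr hy)
  · have h := hkey (n - k y)
    have e1 : n - k y + a = n + (a - k y) := by ring
    have e2 : n - k y + k y = n := by ring
    rw [e1, e2, dist_eq_norm] at h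
    exact h.le
lemma shift_sum (f : ℤ → ℂ) (a τ : ℤ) (K : ℕ) :
    (∑ k ∈ Finset.Icc (a - (K:ℤ)) (a + (K:ℤ)), f (k + τ))
      = ∑ k ∈ Finset.Icc (a + τ - (K:ℤ)) (a + τ + (K:ℤ)), f k := by
  rw [show a + τ - (K:ℤ) = (a - K) + τ by ring, show a + τ + (K:ℤ) = (a + K) + τ by ring,
    ← Finset.map_add_right_Icc, Finset.sum_map]
  rfl

lemma card_Icc' (a : ℤ) (K : ℕ) : (Finset.Icc (a - (K:ℤ)) (a + (K:ℤ))).card = 2 * K + 1 := by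
  rw [Int.card_Icc]; omega

lemma norm_sum_le_card (s : Finset ℤ) (f : ℤ → ℂ) {M : ℝ} (hM : ∀ n, ‖f n‖ ≤ M) :
    ‖∑ k ∈ s, f k‖ ≤ s.card * M := by
  calc ‖∑ k ∈ s, f k‖ ≤ ∑ k ∈ s, ‖f k‖ := norm_sum_le _ _
    _ ≤ ∑ k ∈ s, M := Finset.sum_le_sum fun k _ => hM k
    _ = s.card * M := by rw [Finset.sum_const, nsmul_eq_mul]

lemma Icc_eq_Ioc (l u : ℤ) : Finset.Icc l u = Finset.Ioc (l - 1) u := by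
  ext x; simp only [Finset.mem_Icc, Finset.mem_Ioc]; omega

lemma sum_Ioc_consecutive' (f : ℤ → ℂ) {a b c : ℤ} (hab : a ≤ b) (hbc : b ≤ c) :
    (∑ i ∈ Finset.Ioc a b, f i) + ∑ i ∈ Finset.Ioc b c, f i = ∑ i ∈ Finset.Ioc a c, f i := by
  rw [← Finset.Ioc_union_Ioc_eq_Ioc hab hbc, Finset.sum_union]
  apply Finset.disjoint_left.2
  intro x hx h'x
  exact lt_irrefl _ ((Finset.mem_Ioc.1 h'x).1.trans_le (Finset.mem_Ioc.1 hx).2)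

-- window shift estimate, nonneg case
lemma T2_nonneg (f : ℤ → ℂ) {M : ℝ} (hM : ∀ n, ‖f n‖ ≤ M) (a : ℤ) (K : ℕ) {c : ℤ} (hc : 0 ≤ c) :
    ‖(∑ k ∈ Finset.Icc (a + c - (K:ℤ)) (a + c + (K:ℤ)), f k)
        - ∑ k ∈ Finset.Icc (a - (K:ℤ)) (a + (K:ℤ)), f k‖ ≤ 2 * M * c := by
  have e1 := sum_Ioc_consecutive' f (show a - K - 1 ≤ a + K by omega) (show (a:ℤ) + K ≤ a + c + K by omega)
  have e2 := sum_Ioc_consecutive' f (show a - K - 1 ≤ a + c - K - 1 by omega) (show a + c - K - 1 ≤ a + c + K by omega)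
  rw [Icc_eq_Ioc, Icc_eq_Ioc, show a + c - (K:ℤ) - 1 = a + c - K - 1 by ring, show a - (K:ℤ) - 1 = a - K - 1 by ring]
  have key : (∑ k ∈ Finset.Ioc (a + c - K - 1) (a + c + K), f k)
      - ∑ k ∈ Finset.Ioc (a - K - 1) (a + K), f k
      = (∑ i ∈ Finset.Ioc ((a:ℤ) + K) (a + c + K), f i)
        - ∑ i ∈ Finset.Ioc (a - K - 1) (a + c - K - 1), f i := by
    linear_combination e2 - e1
  rw [key]
  have h1 : ‖∑ i ∈ Finset.Ioc ((a:ℤ) + K) (a + c + K), f i‖ ≤ M * c := by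
    have := norm_sum_le_card (Finset.Ioc ((a:ℤ) + K) (a + c + K)) f hM
    have hcast : ((c.toNat : ℝ)) = (c : ℝ) := by exact_mod_cast Int.toNat_of_nonneg hc
    rwa [Int.card_Ioc, show (a + c + K - (a + K)) = c by ring, hcast, mul_comm] at this
  have h2 : ‖∑ i ∈ Finset.Ioc (a - K - 1) (a + c - K - 1), f i‖ ≤ M * c := by
    have := norm_sum_le_card (Finset.Ioc (a - K - 1) (a + c - K - 1)) f hM
    have hcast : ((c.toNat : ℝ)) = (c : ℝ) := by exact_mod_cast Int.toNat_of_nonneg hc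
    rwa [Int.card_Ioc, show (a + c - K - 1 - (a - K - 1)) = c by ring, hcast, mul_comm] at this
  calc ‖_ - _‖ ≤ ‖∑ i ∈ Finset.Ioc ((a:ℤ) + K) (a + c + K), f i‖ + ‖∑ i ∈ Finset.Ioc (a - K - 1) (a + c - K - 1), f i‖ := norm_sub_le _ _
    _ ≤ M * c + M * c := add_le_add h1 h2
    _ = 2 * M * c := by ring

lemma T2 (f : ℤ → ℂ) {M : ℝ} (hM : ∀ n, ‖f n‖ ≤ M) (a : ℤ) (K : ℕ) (c : ℤ) :
    ‖(∑ k ∈ Finset.Icc (a + c - (K:ℤ)) (a + c + (K:ℤ)), f k)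
        - ∑ k ∈ Finset.Icc (a - (K:ℤ)) (a + (K:ℤ)), f k‖ ≤ 2 * M * (c.natAbs : ℝ) := by
  rcases le_or_gt 0 c with hc | hc
  · have := T2_nonneg f hM a K hc
    have hcast : ((c.natAbs : ℝ)) = (c : ℝ) := by
      rw [Nat.cast_natAbs]; exact_mod_cast abs_of_nonneg hc
    rw [hcast]; exact_mod_cast this
  · have h := T2_nonneg f hM (a + c) K (show (0:ℤ) ≤ -c by omega)
    rw [show a + c + -c = a by ring] at h
    rw [norm_sub_rev]
    have hcast : ((c.natAbs : ℝ)) = ((-c : ℤ) : ℝ) := by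
      rw [Nat.cast_natAbs]; exact_mod_cast abs_of_neg hc
    rw [hcast]; exact_mod_cast h


lemma bounded (f : ℤ → ℂ) (hf : AlmostPeriodicSeq f) : ∃ M : ℝ, 0 ≤ M ∧ ∀ n, ‖f n‖ ≤ M := by
  obtain ⟨L, hL⟩ := density f hf one_pos
  have hne : (Finset.Icc (-(L:ℤ)) (L:ℤ)).Nonempty := ⟨0, Finset.mem_Icc.mpr ⟨by omega, by omega⟩⟩
  set M₀ := (Finset.Icc (-(L:ℤ)) (L:ℤ)).sup' hne (fun m => ‖f m‖) with hM₀
  have h0 : ‖f 0‖ ≤ M₀ := by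
    rw [hM₀]
    exact Finset.le_sup' (fun m => ‖f m‖) (Finset.mem_Icc.mpr ⟨by omega, by omega⟩)
  refine ⟨M₀ + 1, by linarith [norm_nonneg (f 0)], fun n => ?_⟩
  obtain ⟨τ, hτ, hper⟩ := hL n
  have h1 := hper (n - τ)
  rw [show n - τ + τ = n by ring] at h1
  have h2 : ‖f (n - τ)‖ ≤ M₀ := by
    rw [hM₀]
    exact Finset.le_sup' (fun m => ‖f m‖) (Finset.mem_Icc.mpr ⟨by omega, by omega⟩)
  have h3 := norm_sub_norm_le (f n) (f (n - τ))
  linarith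

lemma I1 (f : ℤ → ℂ) {M ε : ℝ} (hM : ∀ n, ‖f n‖ ≤ M) (hM0 : 0 ≤ M) {L : ℕ}
    (hden : ∀ a : ℤ, ∃ τ : ℤ, (a - τ).natAbs ≤ L ∧ ∀ n, ‖f (n + τ) - f n‖ ≤ ε)
    (a b : ℤ) (K : ℕ) :
    ‖S f b K - S f a K‖ ≤ (2 * K + 1) * ε + 2 * M * L := by
  obtain ⟨τ, hτ, hper⟩ := hden (b - a)
  have h_ap : ‖S f (a + τ) K - S f a K‖ ≤ (2 * K + 1) * ε := by
    rw [show S f (a + τ) K = ∑ k ∈ Finset.Icc (a - (K:ℤ)) (a + (K:ℤ)), f (k + τ) from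
      (shift_sum f a τ K).symm, S, ← Finset.sum_sub_distrib]
    calc ‖∑ k ∈ Finset.Icc (a - (K:ℤ)) (a + (K:ℤ)), (f (k + τ) - f k)‖
        ≤ ∑ k ∈ Finset.Icc (a - (K:ℤ)) (a + (K:ℤ)), ‖f (k + τ) - f k‖ := norm_sum_le _ _
      _ ≤ ∑ k ∈ Finset.Icc (a - (K:ℤ)) (a + (K:ℤ)), ε := Finset.sum_le_sum fun k _ => hper k
      _ = (2 * K + 1) * ε := by
          rw [Finset.sum_const, nsmul_eq_mul, card_Icc']; push_cast; ring
  have h_sh : ‖S f b K - S f (a + τ) K‖ ≤ 2 * M * L := by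
    have h := T2 f hM (a + τ) K (b - a - τ)
    rw [show a + τ + (b - a - τ) = b by ring] at h
    refine h.trans ?_
    have : ((b - a - τ).natAbs : ℝ) ≤ (L : ℝ) := by exact_mod_cast hτ
    nlinarith
  calc ‖S f b K - S f a K‖
      ≤ ‖S f b K - S f (a + τ) K‖ + ‖S f (a + τ) K - S f a K‖ := by
        have := norm_sub_le_norm_sub_add_norm_sub (S f b K) (S f (a + τ) K) (S f a K)
        exact this
    _ ≤ 2 * M * L + (2 * K + 1) * ε := add_le_add h_sh h_ap
    _ = (2 * K + 1) * ε + 2 * M * L := by ring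

lemma I2 (f : ℤ → ℂ) (a : ℤ) (K N : ℕ) :
    (∑ t ∈ Finset.Icc (a - (K:ℤ)) (a + (K:ℤ)), S f t N)
      = ∑ d ∈ Finset.Icc (-(N:ℤ)) (N:ℤ), S f (a + d) K := by
  have h1 : ∀ t : ℤ, S f t N = ∑ d ∈ Finset.Icc (-(N:ℤ)) (N:ℤ), f (d + t) := by
    intro t
    have := shift_sum f 0 t N
    simp only [zero_sub, zero_add] at this
    rw [S, ← this]
  calc (∑ t ∈ Finset.Icc (a - (K:ℤ)) (a + (K:ℤ)), S f t N)
      = ∑ t ∈ Finset.Icc (a - (K:ℤ)) (a + (K:ℤ)),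
          ∑ d ∈ Finset.Icc (-(N:ℤ)) (N:ℤ), f (d + t) := by
        exact Finset.sum_congr rfl fun t _ => h1 t
    _ = ∑ d ∈ Finset.Icc (-(N:ℤ)) (N:ℤ),
          ∑ t ∈ Finset.Icc (a - (K:ℤ)) (a + (K:ℤ)), f (t + d) := by
        rw [Finset.sum_comm]
        exact Finset.sum_congr rfl fun d _ => Finset.sum_congr rfl fun t _ => by rw [add_comm]
    _ = ∑ d ∈ Finset.Icc (-(N:ℤ)) (N:ℤ), S f (a + d) K := by
        exact Finset.sum_congr rfl fun d _ => shift_sum f a d K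

lemma main_est (f : ℤ → ℂ) {M ε : ℝ} (hM : ∀ n, ‖f n‖ ≤ M) (hM0 : 0 ≤ M) {L : ℕ}
    (hden : ∀ a : ℤ, ∃ τ : ℤ, (a - τ).natAbs ≤ L ∧ ∀ n, ‖f (n + τ) - f n‖ ≤ ε)
    (a : ℤ) (K N : ℕ) :
    ‖A f a K - A f 0 N‖
      ≤ ε + 2 * M * L / (2 * N + 1) + 2 * N * M / (2 * K + 1) := by
  have hKpos : (0:ℝ) < 2 * K + 1 := by positivity
  have hNpos : (0:ℝ) < 2 * N + 1 := by positivity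
  -- first piece : ‖(2N+1) • S f a K - ∑_d S f (a+d) K‖ ≤ (2N+1) * (2 M N)
  have hp1 : ‖(((2 * N + 1 : ℕ) : ℂ)) * S f a K - ∑ d ∈ Finset.Icc (-(N:ℤ)) (N:ℤ), S f (a + d) K‖
      ≤ (2 * N + 1) * (2 * M * N) := by
    have hcard : (Finset.Icc (-(N:ℤ)) (N:ℤ)).card = 2 * N + 1 := by
      rw [Int.card_Icc]; omega
    have hconst : (((2 * N + 1 : ℕ) : ℂ)) * S f a K
        = ∑ _d ∈ Finset.Icc (-(N:ℤ)) (N:ℤ), S f a K := by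
      rw [Finset.sum_const, hcard, nsmul_eq_mul]
    rw [hconst, ← Finset.sum_sub_distrib]
    calc ‖∑ d ∈ Finset.Icc (-(N:ℤ)) (N:ℤ), (S f a K - S f (a + d) K)‖
        ≤ ∑ d ∈ Finset.Icc (-(N:ℤ)) (N:ℤ), ‖S f a K - S f (a + d) K‖ := norm_sum_le _ _
      _ ≤ ∑ _d ∈ Finset.Icc (-(N:ℤ)) (N:ℤ), (2 * M * N) := by
          refine Finset.sum_le_sum fun d hd => ?_
          rw [norm_sub_rev]
          have h := T2 f hM a K d
          refine h.trans ?_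
          have hd' : (d.natAbs : ℝ) ≤ (N : ℝ) := by
            rw [Finset.mem_Icc] at hd
            exact_mod_cast (show (d.natAbs : ℤ) ≤ (N:ℤ) by omega)
          nlinarith
      _ = (2 * N + 1) * (2 * M * N) := by
          rw [Finset.sum_const, hcard, nsmul_eq_mul]; push_cast; ring
  -- second piece
  have hp2 : ‖(∑ t ∈ Finset.Icc (a - (K:ℤ)) (a + (K:ℤ)), S f t N)
        - (((2 * K + 1 : ℕ) : ℂ)) * S f 0 N‖
      ≤ (2 * K + 1) * ((2 * N + 1) * ε + 2 * M * L) := by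
    have hconst : (((2 * K + 1 : ℕ) : ℂ)) * S f 0 N
        = ∑ _t ∈ Finset.Icc (a - (K:ℤ)) (a + (K:ℤ)), S f 0 N := by
      rw [Finset.sum_const, card_Icc', nsmul_eq_mul]
    rw [hconst, ← Finset.sum_sub_distrib]
    calc ‖∑ t ∈ Finset.Icc (a - (K:ℤ)) (a + (K:ℤ)), (S f t N - S f 0 N)‖
        ≤ ∑ t ∈ Finset.Icc (a - (K:ℤ)) (a + (K:ℤ)), ‖S f t N - S f 0 N‖ := norm_sum_le _ _
      _ ≤ ∑ _t ∈ Finset.Icc (a - (K:ℤ)) (a + (K:ℤ)), ((2 * N + 1) * ε + 2 * M * L) :=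
          Finset.sum_le_sum fun t _ => I1 f hM hM0 hden 0 t N
      _ = (2 * K + 1) * ((2 * N + 1) * ε + 2 * M * L) := by
          rw [Finset.sum_const, card_Icc', nsmul_eq_mul]; push_cast; ring
  -- combine
  have hcomb : ‖(((2 * N + 1 : ℕ) : ℂ)) * S f a K - (((2 * K + 1 : ℕ) : ℂ)) * S f 0 N‖
      ≤ (2 * N + 1) * (2 * M * N) + (2 * K + 1) * ((2 * N + 1) * ε + 2 * M * L) := by
    rw [I2 f a K N] at hp2
    have tri := tri3 ((((2 * N + 1 : ℕ) : ℂ)) * S f a K)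
      (∑ d ∈ Finset.Icc (-(N:ℤ)) (N:ℤ), S f (a + d) K)
      ((((2 * K + 1 : ℕ) : ℂ)) * S f 0 N)
    linarith
  set cK : ℂ := ((2 * K + 1 : ℕ) : ℂ) with hcKdef
  set cN : ℂ := ((2 * N + 1 : ℕ) : ℂ) with hcNdef
  have hcK : cK ≠ 0 := Nat.cast_ne_zero.mpr (by omega)
  have hcN : cN ≠ 0 := Nat.cast_ne_zero.mpr (by omega)
  have hid : A f a K - A f 0 N = (cK * cN)⁻¹ * (cN * S f a K - cK * S f 0 N) := by
    rw [A, A, show (2 * (K:ℂ) + 1) = cK by rw [hcKdef]; push_cast; ring,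
      show (2 * (N:ℂ) + 1) = cN by rw [hcNdef]; push_cast; ring]
    field_simp
  have nK : ‖cK‖ = (2 * (K:ℝ) + 1) := by
    rw [hcKdef, Complex.norm_natCast]; push_cast; ring
  have nN : ‖cN‖ = (2 * (N:ℝ) + 1) := by
    rw [hcNdef, Complex.norm_natCast]; push_cast; ring
  rw [hid, norm_mul, norm_inv, norm_mul, nK, nN]
  have hstep : ((2 * (K:ℝ) + 1) * (2 * (N:ℝ) + 1))⁻¹ * ‖cN * S f a K - cK * S f 0 N‖
      ≤ ((2 * (K:ℝ) + 1) * (2 * (N:ℝ) + 1))⁻¹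
        * ((2 * N + 1) * (2 * M * N) + (2 * K + 1) * ((2 * N + 1) * ε + 2 * M * L)) :=
    mul_le_mul_of_nonneg_left hcomb (by positivity)
  refine hstep.trans (le_of_eq ?_)
  field_simp
  ring

lemma key (f : ℤ → ℂ) (hf : AlmostPeriodicSeq f) {ε : ℝ} (hε : 0 < ε) :
    ∃ K₀ : ℕ, ∀ (a b : ℤ) (K K' : ℕ), K₀ ≤ K → K₀ ≤ K' → ‖A f a K - A f b K'‖ ≤ ε := by
  obtain ⟨M, hM0, hM⟩ := bounded f hf
  have hε6 : 0 < ε / 6 := by linarith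
  obtain ⟨L, hden⟩ := density f hf hε6
  obtain ⟨N, hN⟩ := exists_nat_ge (2 * M * L / (ε / 6))
  have hA : 2 * M * (L:ℝ) / (2 * (N:ℝ) + 1) ≤ ε / 6 := by
    rw [div_le_iff₀ (by positivity)]
    rw [div_le_iff₀ hε6] at hN
    nlinarith
  obtain ⟨K₀, hK₀⟩ := exists_nat_ge (2 * N * M / (ε / 6))
  refine ⟨K₀, fun a b K K' hK hK' => ?_⟩
  have bndK : ∀ (c : ℤ) (J : ℕ), K₀ ≤ J → ‖A f c J - A f 0 N‖ ≤ ε / 2 := by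
    intro c J hJ
    have h := main_est f hM hM0 hden c J N
    have h2 : 2 * (N:ℝ) * M / (2 * (J:ℝ) + 1) ≤ ε / 6 := by
      rw [div_le_iff₀ (by positivity)]
      rw [div_le_iff₀ hε6] at hK₀
      have hJ' : (K₀:ℝ) ≤ (J:ℝ) := by exact_mod_cast hJ
      nlinarith
    linarith
  have h1 := bndK a K hK
  have h2 := bndK b K' hK'
  have tri := tri3 (A f a K) (A f 0 N) (A f b K')
  rw [norm_sub_rev (A f 0 N) (A f b K')] at tri
  linarith

end APProof

/-- For an almost periodic sequence on ℤ, the mean value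
`⟨f⟩ = lim_{N→∞} (1/(2N+1)) ∑_{k=n₀-N}^{n₀+N} f(k)` exists and is independent of `n₀`. -/
theorem stmt_1 (f : ℤ → ℂ) (hf : AlmostPeriodicSeq f) :
    ∃ μ : ℂ, ∀ n₀ : ℤ, Filter.Tendsto
      (fun N : ℕ => (2 * (N : ℂ) + 1)⁻¹ * ∑ k ∈ Finset.Icc (n₀ - (N : ℤ)) (n₀ + (N : ℤ)), f k)
      Filter.atTop (nhds μ) := by
  classical
  have hC : CauchySeq (fun N => APProof.A f 0 N) := by
    rw [Metric.cauchySeq_iff]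
    intro ε hε
    obtain ⟨K₀, hK₀⟩ := APProof.key f hf (half_pos hε)
    exact ⟨K₀, fun m hm n hn =>
      lt_of_le_of_lt (by rw [dist_eq_norm]; exact hK₀ 0 0 m n hm hn) (half_lt_self hε)⟩
  obtain ⟨μ, hμ⟩ := cauchySeq_tendsto_of_complete hC
  refine ⟨μ, fun n₀ => ?_⟩
  have key : Filter.Tendsto (fun N => APProof.A f n₀ N) Filter.atTop (nhds μ) := by
    rw [Metric.tendsto_atTop]
    intro ε hε
    obtain ⟨K₀, hK₀⟩ := APProof.key f hf (show (0:ℝ) < ε / 3 by linarith)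
    obtain ⟨K₁, hK₁⟩ := (Metric.tendsto_atTop.mp hμ) (ε / 3) (by linarith)
    refine ⟨K₀, fun K hK => ?_⟩
    have h1 : ‖APProof.A f n₀ K - APProof.A f 0 (max K₀ K₁)‖ ≤ ε / 3 :=
      hK₀ n₀ 0 K _ hK (le_max_left _ _)
    have h2 := hK₁ (max K₀ K₁) (le_max_right _ _)
    calc dist (APProof.A f n₀ K) μ
        ≤ dist (APProof.A f n₀ K) (APProof.A f 0 (max K₀ K₁))
          + dist (APProof.A f 0 (max K₀ K₁)) μ := dist_triangle _ _ _
      _ < ε := by rw [dist_eq_norm]; linarith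
  exact key
end

section
/- If f is an almost periodic sequence on ℤ with mean value zero, then the partial sums F(n) = ∑_{k=n₀}^{n} f(k) satisfy F(n) = o(|n|) as |n| → ∞. -/
open scoped UniformConvergence

namespace APAux

open Finset Filter

variable (f : ℤ → ℂ)

/-- Window sum of length `L` starting at `a`. -/
noncomputable def S (a : ℤ) (L : ℕ) : ℂ := ∑ j ∈ Finset.range L, f (a + j)

lemma sum_Icc_eq (a : ℤ) (L : ℕ) :
    ∑ k ∈ Finset.Icc a (a + L - 1), f k = S f a L := by
  rw [S]
  rw [show Finset.Icc a (a + (L:ℤ) - 1)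
      = (Finset.range L).map ⟨fun j : ℕ => a + (j : ℤ), id (by intro x y h; simpa using h)⟩ from ?_]
  · rw [Finset.sum_map]; simp
  · ext k
    simp only [Finset.mem_Icc, Finset.mem_map, Finset.mem_range, Function.Embedding.coeFn_mk]
    constructor
    · rintro ⟨h1, h2⟩
      exact ⟨(k - a).toNat, by omega, by omega⟩
    · rintro ⟨j, hj, rfl⟩
      omega

lemma exists_almost_periods (hf : AlmostPeriodicSeq f) {ε : ℝ} (hε : 0 < ε) :
    ∃ ℓ : ℕ, ∀ k : ℤ, ∃ τ : ℤ, |k - τ| ≤ (ℓ : ℤ) ∧ ∀ n : ℤ, ‖f (n + τ) - f n‖ ≤ ε := by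
  have htb : TotallyBounded (Translates f) :=
    TotallyBounded.subset subset_closure hf.totallyBounded
  have hV : {p : ℂ × ℂ | dist p.1 p.2 < ε / 2} ∈ uniformity ℂ :=
    Metric.dist_mem_uniformity (by positivity)
  have hU : UniformFun.gen ℤ ℂ {p : ℂ × ℂ | dist p.1 p.2 < ε / 2} ∈ uniformity (ℤ →ᵤ ℂ) :=
    (UniformFun.hasBasis_uniformity ℤ ℂ).mem_of_mem hV
  obtain ⟨t, hts, htfin, hcov⟩ := htb.exists_subset hU
  -- choose a translate index for each element of t
  have hchoice : ∀ y ∈ t, ∃ k : ℤ, y = UniformFun.ofFun (fun n => f (n + k)) := fun y hy => hts hy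
  classical
  let r : (ℤ →ᵤ ℂ) → ℤ := fun y => if h : ∃ k : ℤ, y = UniformFun.ofFun (fun n => f (n + k)) then h.choose else 0
  let R : Finset ℤ := htfin.toFinset.image r
  refine ⟨R.sup (fun k => k.natAbs), fun k => ?_⟩
  have hk : UniformFun.ofFun (fun n => f (n + k)) ∈ Translates f := ⟨k, rfl⟩
  obtain ⟨y, hy, hky⟩ : ∃ y ∈ t, (UniformFun.ofFun (fun n => f (n + k)), y)
      ∈ UniformFun.gen ℤ ℂ {p : ℂ × ℂ | dist p.1 p.2 < ε / 2} := by
    have := hcov hk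
    simpa using this
  have hyt : ∃ k' : ℤ, y = UniformFun.ofFun (fun n => f (n + k')) := hchoice y hy
  set k' : ℤ := r y with hk'
  have hyk' : y = UniformFun.ofFun (fun n => f (n + k')) := by
    rw [hk']
    simp only [r, dif_pos hyt]
    exact hyt.choose_spec
  refine ⟨k - k', ?_, ?_⟩
  · have : k' ∈ R := Finset.mem_image.2 ⟨y, htfin.mem_toFinset.2 hy, rfl⟩
    have h2 := Finset.le_sup (f := fun k => k.natAbs) this
    rw [show k - (k - k') = k' by ring, Int.abs_eq_natAbs]
    exact_mod_cast h2
  · intro n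
    have h1 := hky (n - k')
    rw [hyk'] at h1
    have h2 : dist (f (n - k' + k)) (f (n - k' + k')) < ε / 2 := h1
    rw [dist_eq_norm] at h2
    rw [show n - k' + k = n + (k - k') from by ring, show n - k' + k' = n from by ring] at h2
    linarith

lemma exists_bound (hf : AlmostPeriodicSeq f) : ∃ M : ℝ, 0 ≤ M ∧ ∀ n : ℤ, ‖f n‖ ≤ M := by
  obtain ⟨ℓ, hℓ⟩ := exists_almost_periods f hf one_pos
  have hne : (Finset.Icc (-(ℓ:ℤ)) (ℓ:ℤ)).Nonempty := ⟨0, by simp⟩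
  set M₀ : ℝ := (Finset.Icc (-(ℓ:ℤ)) (ℓ:ℤ)).sup' hne (fun j => ‖f j‖) with hM₀
  refine ⟨M₀ + 1, ?_, ?_⟩
  · have h0 : ‖f 0‖ ≤ M₀ :=
      Finset.le_sup' (fun j => ‖f j‖) (by simp : (0:ℤ) ∈ Finset.Icc (-(ℓ:ℤ)) (ℓ:ℤ))
    linarith [norm_nonneg (f 0)]
  · intro n
    obtain ⟨τ, h1, h2⟩ := hℓ n
    rw [abs_le] at h1
    have h3 := h2 (n - τ)
    rw [show n - τ + τ = n from by ring] at h3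
    have h4 : ‖f (n - τ)‖ ≤ M₀ :=
      Finset.le_sup' (fun j => ‖f j‖) (by rw [Finset.mem_Icc]; omega : n - τ ∈ Finset.Icc (-(ℓ:ℤ)) (ℓ:ℤ))
    calc ‖f n‖ ≤ ‖f (n - τ)‖ + ‖f n - f (n - τ)‖ := by
          have := norm_add_le (f (n - τ)) (f n - f (n - τ)); simpa using this
      _ ≤ M₀ + 1 := add_le_add h4 h3

lemma S_shift_almost {τ : ℤ} {ε : ℝ} (hτ : ∀ n : ℤ, ‖f (n + τ) - f n‖ ≤ ε) (a : ℤ) (L : ℕ) :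
    ‖S f a L - S f (a - τ) L‖ ≤ L * ε := by
  rw [S, S, ← Finset.sum_sub_distrib]
  refine (norm_sum_le _ _).trans ?_
  refine (Finset.sum_le_card_nsmul _ _ ε ?_).trans ?_
  · intro j _
    have := hτ (a - τ + j)
    rwa [show a - τ + (j:ℤ) + τ = a + j from by ring] at this
  · simp [nsmul_eq_mul]

lemma S_succ (a : ℤ) (L : ℕ) : S f (a + 1) L - S f a L = f (a + L) - f a := by
  have h1 : S f a (L + 1) = S f a L + f (a + L) := by
    rw [S, S, Finset.sum_range_succ]
  have h2 : S f a (L + 1) = S f (a + 1) L + f a := by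
    rw [S, Finset.sum_range_succ']
    congr 1
    · rw [S]
      refine Finset.sum_congr rfl fun j _ => ?_
      congr 1; push_cast; ring
    · norm_num
  linear_combination -(h1.symm.trans h2)

lemma S_shift_nat (a : ℤ) (d L : ℕ) {M : ℝ} (hM : ∀ n : ℤ, ‖f n‖ ≤ M) :
    ‖S f (a + d) L - S f a L‖ ≤ 2 * d * M := by
  induction d with
  | zero => simp
  | succ d ih =>
    have hs := S_succ f (a + d) L
    have e : a + ((d:ℤ) + 1) = a + d + 1 := by ring
    push_cast
    rw [e]
    calc ‖S f (a + d + 1) L - S f a L‖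
        ≤ ‖S f (a + d + 1) L - S f (a + d) L‖ + ‖S f (a + d) L - S f a L‖ := by
          have := norm_add_le (S f (a + d + 1) L - S f (a + d) L) (S f (a + d) L - S f a L)
          simpa using this
      _ ≤ (‖f (a + d + L)‖ + ‖f (a + d)‖) + 2 * d * M := by
          refine add_le_add ?_ ih
          rw [hs]
          exact (norm_sub_le _ _).trans (le_refl _)
      _ ≤ (M + M) + 2 * d * M := by
          have hA := hM (a + d + L); have hB := hM (a + d); linarith
      _ = 2 * ((d:ℝ) + 1) * M := by ring

lemma S_shift (a b : ℤ) (d L : ℕ) (h : |a - b| ≤ (d:ℤ)) {M : ℝ} (hM0 : 0 ≤ M)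
    (hM : ∀ n : ℤ, ‖f n‖ ≤ M) : ‖S f a L - S f b L‖ ≤ 2 * d * M := by
  rw [abs_le] at h
  rcases le_total b a with hba | hab
  · have e : a = b + ((a - b).toNat : ℤ) := by omega
    have := S_shift_nat f b (a - b).toNat L hM
    rw [← e] at this
    refine this.trans ?_
    have : ((a - b).toNat : ℝ) ≤ (d:ℝ) := by exact_mod_cast (by omega : ((a-b).toNat : ℤ) ≤ d)
    nlinarith
  · have e : b = a + ((b - a).toNat : ℤ) := by omega
    have := S_shift_nat f a (b - a).toNat L hM
    rw [← e, norm_sub_rev] at this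
    refine this.trans ?_
    have : ((b - a).toNat : ℝ) ≤ (d:ℝ) := by exact_mod_cast (by omega : ((b-a).toNat : ℤ) ≤ d)
    nlinarith

lemma S_split (a : ℤ) (L t : ℕ) : S f a (L + t) = S f a L + S f (a + L) t := by
  rw [S, S, S, Finset.sum_range_add]
  congr 1
  refine Finset.sum_congr rfl fun j _ => ?_
  congr 1; push_cast; ring

lemma key (hf : AlmostPeriodicSeq f)
    (hmean : Filter.Tendsto
      (fun N : ℕ => (2 * (N : ℂ) + 1)⁻¹ * ∑ k ∈ Finset.Icc (-(N : ℤ)) (N : ℤ), f k)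
      Filter.atTop (nhds 0))
    {ε : ℝ} (hε : 0 < ε) :
    ∃ L : ℕ, 0 < L ∧ ∀ a : ℤ, ‖S f a L‖ ≤ ε * L := by
  obtain ⟨M, hM0, hM⟩ := exists_bound f hf
  obtain ⟨ℓ, hℓ⟩ := exists_almost_periods f hf (show (0:ℝ) < ε/4 by linarith)
  obtain ⟨N₀, hN₀⟩ := Metric.tendsto_atTop.1 hmean (ε/4) (by linarith)
  set N : ℕ := max N₀ ⌈(8 * ℓ * M) / ε⌉₊ with hN
  set L : ℕ := 2 * N + 1 with hLdef
  have hLpos : 0 < L := by omega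
  have hcast : ((L:ℕ) : ℝ) = 2 * (N:ℝ) + 1 := by rw [hLdef]; push_cast; ring
  have hsmall : 2 * (ℓ:ℝ) * M ≤ ε / 4 * L := by
    have h1 : (8 * ℓ * M) / ε ≤ (⌈(8 * ℓ * M) / ε⌉₊ : ℝ) := Nat.le_ceil _
    have h2' : ⌈(8 * ℓ * M) / ε⌉₊ ≤ N := le_max_right N₀ _
    have h2 : ((⌈(8 * ℓ * M) / ε⌉₊ : ℕ) : ℝ) ≤ (N:ℝ) := by exact_mod_cast h2'
    have h3 : (N:ℝ) ≤ (L:ℝ) := by rw [hcast]; linarith [Nat.cast_nonneg (α := ℝ) N]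
    have h4 : (8 * ℓ * M) / ε ≤ (L:ℝ) := by linarith
    have h5 : 8 * (ℓ:ℝ) * M ≤ ε * L := by
      have := (div_le_iff₀ hε).1 h4
      linarith [this]
    linarith
  -- the symmetric sum is small
  have hsym : ‖S f (-(N:ℤ)) L‖ ≤ ε / 4 * L := by
    have hIcc : ∑ k ∈ Finset.Icc (-(N:ℤ)) (N:ℤ), f k = S f (-(N:ℤ)) L := by
      have := sum_Icc_eq f (-(N:ℤ)) L
      rwa [show (-(N:ℤ)) + (L:ℤ) - 1 = (N:ℤ) from by push_cast [hLdef]; ring] at this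
    have hN' := hN₀ N (le_max_left _ _)
    rw [dist_eq_norm, sub_zero] at hN'
    set c : ℂ := 2 * (N:ℂ) + 1 with hcdef
    have hc0 : c ≠ 0 := by
      rw [hcdef]
      have : ((2 * N + 1 : ℕ) : ℂ) ≠ 0 := Nat.cast_ne_zero.2 (by omega)
      convert this using 1; push_cast; ring
    have hnormc : ‖c‖ = (L:ℝ) := by
      rw [hcdef, show (2 * (N:ℂ) + 1) = ((2 * N + 1 : ℕ) : ℂ) from by push_cast; ring,
        Complex.norm_natCast]
    have hfactor : ∑ k ∈ Finset.Icc (-(N:ℤ)) (N:ℤ), f k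
        = c * (c⁻¹ * ∑ k ∈ Finset.Icc (-(N:ℤ)) (N:ℤ), f k) := by
      rw [← mul_assoc, mul_inv_cancel₀ hc0, one_mul]
    rw [← hIcc, hfactor, norm_mul, hnormc]
    have hLnn : (0:ℝ) ≤ (L:ℝ) := Nat.cast_nonneg _
    calc (L:ℝ) * ‖c⁻¹ * ∑ k ∈ Finset.Icc (-(N:ℤ)) (N:ℤ), f k‖
        ≤ (L:ℝ) * (ε/4) := by
          refine mul_le_mul_of_nonneg_left ?_ hLnn
          exact le_of_lt hN'
      _ = ε / 4 * L := by ring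
  refine ⟨L, hLpos, fun a => ?_⟩
  obtain ⟨τ, h1, h2⟩ := hℓ (a + N)
  have hA : ‖S f a L - S f (a - τ) L‖ ≤ (L:ℝ) * (ε/4) := S_shift_almost f h2 a L
  have hB : ‖S f (a - τ) L - S f (-(N:ℤ)) L‖ ≤ 2 * ℓ * M := by
    refine S_shift f (a - τ) (-(N:ℤ)) ℓ L ?_ hM0 hM
    rw [show (a - τ) - (-(N:ℤ)) = a + N - τ from by ring]
    exact h1
  calc ‖S f a L‖
      = ‖(S f a L - S f (a - τ) L) + (S f (a - τ) L - S f (-(N:ℤ)) L) + S f (-(N:ℤ)) L‖ := by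
        congr 1; ring
    _ ≤ ‖S f a L - S f (a - τ) L‖ + ‖S f (a - τ) L - S f (-(N:ℤ)) L‖ + ‖S f (-(N:ℤ)) L‖ :=
        norm_add₃_le
    _ ≤ (L:ℝ) * (ε/4) + (ε/4 * L) + (ε/4 * L) := by
        refine add_le_add (add_le_add hA (hB.trans hsmall)) hsym
    _ ≤ ε * L := by nlinarith [Nat.cast_nonneg (α := ℝ) L]

lemma S_global {L : ℕ} {M ε : ℝ} (hL : 0 < L) (hM0 : 0 ≤ M) (hM : ∀ n : ℤ, ‖f n‖ ≤ M)
    (hε : 0 ≤ ε) (h : ∀ a : ℤ, ‖S f a L‖ ≤ ε * L) :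
    ∀ (m : ℕ) (a : ℤ), ‖S f a m‖ ≤ ε * m + L * M := by
  intro m
  induction m using Nat.strong_induction_on with
  | _ m ih =>
    intro a
    rcases lt_or_ge m L with hm | hm
    · have h1 : ‖S f a m‖ ≤ m * M := by
        rw [S]
        refine (norm_sum_le _ _).trans ?_
        refine (Finset.sum_le_card_nsmul _ _ M fun j _ => hM _).trans ?_
        simp [nsmul_eq_mul]
      have h2 : (m:ℝ) ≤ (L:ℝ) := by exact_mod_cast hm.le
      nlinarith [mul_nonneg hε (Nat.cast_nonneg (α := ℝ) m)]
    · have e : L + (m - L) = m := by omega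
      have hsplit := S_split f a L (m - L)
      rw [e] at hsplit
      rw [hsplit]
      have hih := ih (m - L) (by omega) (a + L)
      have hcast : ((m - L : ℕ) : ℝ) = (m:ℝ) - (L:ℝ) := by
        push_cast [Nat.cast_sub hm]; ring
      calc ‖S f a L + S f (a + L) (m - L)‖
          ≤ ‖S f a L‖ + ‖S f (a + L) (m - L)‖ := norm_add_le _ _
        _ ≤ ε * L + (ε * ((m - L : ℕ) : ℝ) + L * M) := add_le_add (h a) hih
        _ = ε * m + L * M := by rw [hcast]; ring

end APAux

/-- If `f` is almost periodic with mean value zero, then the partial sums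
`F(n) = ∑_{k=n₀}^n f(k)` are `o(|n|)` as `|n| → ∞`. -/
theorem stmt_2 (f : ℤ → ℂ) (hf : AlmostPeriodicSeq f) (n₀ : ℤ)
    (hmean : Filter.Tendsto
      (fun N : ℕ => (2 * (N : ℂ) + 1)⁻¹ * ∑ k ∈ Finset.Icc (-(N : ℤ)) (N : ℤ), f k)
      Filter.atTop (nhds 0))
    (F : ℤ → ℂ)
    (hF : ∀ n : ℤ, F n = if n₀ ≤ n then ∑ k ∈ Finset.Icc n₀ n, f k
      else -∑ k ∈ Finset.Ico n n₀, f k) :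
    F =o[Filter.cofinite] fun n : ℤ => (n : ℝ) := by
  classical
  rw [Asymptotics.isLittleO_iff]
  intro c hc
  obtain ⟨M, hM0, hM⟩ := APAux.exists_bound f hf
  obtain ⟨L, hL, hS⟩ := APAux.key f hf hmean (show (0:ℝ) < c/2 by linarith)
  have hglob := APAux.S_global f hL hM0 hM (by linarith : (0:ℝ) ≤ c/2) hS
  obtain ⟨R, hR⟩ := exists_nat_ge ((2 / c) * ((c/2) * (|(n₀:ℝ)| + 1) + L * M))
  rw [Filter.eventually_cofinite]
  refine Set.Finite.subset (Set.finite_Icc (-(R:ℤ)) (R:ℤ)) ?_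
  intro n hn
  simp only [Set.mem_setOf_eq, not_le] at hn
  by_contra hmem
  rw [Set.mem_Icc, not_and_or, not_le, not_le] at hmem
  -- |n| is large
  have habs : ((R:ℤ) : ℝ) ≤ |(n:ℝ)| := by
    rcases hmem with h | h
    · calc ((R:ℤ):ℝ) ≤ -(n:ℝ) := by exact_mod_cast (by omega : (R:ℤ) ≤ -n)
        _ ≤ |(n:ℝ)| := neg_le_abs _
    · calc ((R:ℤ):ℝ) ≤ (n:ℝ) := by exact_mod_cast h.le
        _ ≤ |(n:ℝ)| := le_abs_self _
  -- the main estimate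
  have hFn : ‖F n‖ ≤ (c/2) * (|(n:ℝ)| + |(n₀:ℝ)| + 1) + (L:ℝ) * M := by
    rcases le_or_gt n₀ n with hn₀ | hn₀
    · set m : ℕ := (n - n₀).toNat + 1 with hmdef
      have hm : ((m : ℕ) : ℝ) = (n:ℝ) - (n₀:ℝ) + 1 := by
        have h0 : ((n - n₀).toNat : ℤ) = n - n₀ := Int.toNat_of_nonneg (by omega)
        push_cast [hmdef, h0]
        ring_nf
        rw [show (((n - n₀).toNat : ℝ)) = ((((n - n₀).toNat : ℤ)) : ℝ) from by push_cast; ring,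
          h0]
        push_cast; ring
      have hIcc : Finset.Icc n₀ n = Finset.Icc n₀ (n₀ + (m:ℤ) - 1) := by
        congr 1; omega
      rw [hF n, if_pos hn₀, hIcc, APAux.sum_Icc_eq]
      refine (hglob m n₀).trans ?_
      rw [hm]
      have h1 : (n:ℝ) - (n₀:ℝ) + 1 ≤ |(n:ℝ)| + |(n₀:ℝ)| + 1 := by
        have := le_abs_self ((n:ℝ)); have := neg_abs_le ((n₀:ℝ)); linarith
      have h2 := mul_le_mul_of_nonneg_left h1 (by linarith : (0:ℝ) ≤ c/2)
      linarith
    · set m : ℕ := (n₀ - n).toNat with hmdef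
      have hm : ((m : ℕ) : ℝ) = (n₀:ℝ) - (n:ℝ) := by
        have h0 : ((n₀ - n).toNat : ℤ) = n₀ - n := Int.toNat_of_nonneg (by omega)
        rw [hmdef, show (((n₀ - n).toNat : ℝ)) = ((((n₀ - n).toNat : ℤ)) : ℝ) from by push_cast; ring,
          h0]
        push_cast; ring
      have hIco : Finset.Ico n n₀ = Finset.Icc n (n + (m:ℤ) - 1) := by
        ext x
        simp only [Finset.mem_Ico, Finset.mem_Icc]
        omega
      rw [hF n, if_neg (not_le.2 hn₀), norm_neg, hIco, APAux.sum_Icc_eq]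
      refine (hglob m n).trans ?_
      rw [hm]
      have h1 : (n₀:ℝ) - (n:ℝ) ≤ |(n:ℝ)| + |(n₀:ℝ)| + 1 := by
        have := neg_abs_le ((n:ℝ)); have := le_abs_self ((n₀:ℝ)); linarith
      have h2 := mul_le_mul_of_nonneg_left h1 (by linarith : (0:ℝ) ≤ c/2)
      linarith
  -- conclude
  have hB : (c/2) * (|(n₀:ℝ)| + 1) + (L:ℝ) * M ≤ (c/2) * ((R:ℕ):ℝ) := by
    have h' := mul_le_mul_of_nonneg_left hR (by linarith : (0:ℝ) ≤ c/2)
    have hc0 : c ≠ 0 := ne_of_gt hc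
    rw [show (c/2) * ((2/c) * ((c/2) * (|(n₀:ℝ)| + 1) + (L:ℝ) * M))
        = (c/2) * (|(n₀:ℝ)| + 1) + (L:ℝ) * M from by field_simp] at h'
    exact h'
  rw [Real.norm_eq_abs] at hn
  have hRcast : ((R:ℤ):ℝ) = ((R:ℕ):ℝ) := by push_cast; ring
  rw [hRcast] at habs
  have h3 : (c/2) * ((R:ℕ):ℝ) ≤ (c/2) * |(n:ℝ)| :=
    mul_le_mul_of_nonneg_left habs (by linarith : (0:ℝ) ≤ c/2)
  linarith
end

section
/- If f is a nonnegative almost periodic sequence on ℤ which is not identically zero, then its mean value is strictly positive: ⟨f⟩ > 0. -/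
open scoped UniformConvergence

def TranslatesR (f : ℤ → ℝ) : Set (ℤ →ᵤ ℝ) :=
  {g | ∃ k : ℤ, g = UniformFun.ofFun (fun n => f (n + k))}

def AlmostPeriodicSeqR (f : ℤ → ℝ) : Prop :=
  IsCompact (closure (TranslatesR f))

lemma ap_of_compact {f : ℤ → ℝ} (hf : AlmostPeriodicSeqR f) {ε : ℝ} (hε : 0 < ε) :
    ∃ K : ℤ, 0 ≤ K ∧ ∀ a : ℤ, ∃ τ : ℤ, |τ - a| ≤ K ∧ ∀ n, |f (n + τ) - f n| ≤ ε := by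
  have htb : TotallyBounded (TranslatesR f) := hf.totallyBounded.subset subset_closure
  have hU : {p : ℝ × ℝ | dist p.1 p.2 < ε} ∈ uniformity ℝ := Metric.dist_mem_uniformity hε
  have hV : UniformFun.gen ℤ ℝ {p : ℝ × ℝ | dist p.1 p.2 < ε} ∈ uniformity (ℤ →ᵤ ℝ) :=
    (UniformFun.hasBasis_uniformity ℤ ℝ).mem_of_mem hU
  obtain ⟨t, hts, htf, hcov⟩ := totallyBounded_iff_subset.mp htb _ hV
  have hkey : ∀ y ∈ t, ∃ ky : ℤ, y = UniformFun.ofFun (fun n => f (n + ky)) := fun y hy => hts hy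
  choose! k hk using hkey
  refine ⟨(((htf.toFinset.image (fun y => (k y).natAbs)).sup id : ℕ) : ℤ), Int.natCast_nonneg _, fun a => ?_⟩
  have hmem : UniformFun.ofFun (fun n => f (n + a)) ∈ TranslatesR f := ⟨a, rfl⟩
  obtain ⟨y, hy, hxy⟩ := Set.mem_iUnion₂.mp (hcov hmem)
  refine ⟨a - k y, ?_, fun n => ?_⟩
  · have h1 : (k y).natAbs ∈ htf.toFinset.image (fun y => (k y).natAbs) :=
      Finset.mem_image_of_mem _ (htf.mem_toFinset.mpr hy)
    have h2 := Finset.le_sup (f := id) h1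
    simp only [id] at h2
    have : |a - k y - a| = ((k y).natAbs : ℤ) := by
      rw [show a - k y - a = -(k y) by ring, abs_neg, Int.abs_eq_natAbs]
    rw [this]
    exact_mod_cast h2
  · have := hxy
    rw [hk y hy] at this
    have h3 : dist (f (n - k y + a)) (f (n - k y + k y)) < ε := this (n - k y)
    rw [Real.dist_eq] at h3
    have e1 : n - k y + a = n + (a - k y) := by ring
    have e2 : n - k y + k y = n := by ring
    rw [e1, e2] at h3
    exact h3.le

lemma bdd_of_ap {f : ℤ → ℝ} {K : ℤ} (hK : 0 ≤ K)
    (hap : ∀ a : ℤ, ∃ τ : ℤ, |τ - a| ≤ K ∧ ∀ n, |f (n + τ) - f n| ≤ 1) :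
    ∃ C : ℝ, 0 ≤ C ∧ ∀ n, |f n| ≤ C := by
  have hne : (Finset.Icc (-K) K).Nonempty := ⟨0, by simp [hK, neg_nonpos.mpr hK]⟩
  set M := (Finset.Icc (-K) K).sup' hne (fun j => |f j|) with hM
  refine ⟨M + 1, ?_, fun n => ?_⟩
  · have : |f 0| ≤ M := Finset.le_sup' (fun j => |f j|) (by simp [hK, neg_nonpos.mpr hK] : (0:ℤ) ∈ Finset.Icc (-K) K)
    have := abs_nonneg (f 0)
    linarith
  · obtain ⟨τ, hτ, hper⟩ := hap n
    have h1 : |f ((n - τ) + τ) - f (n - τ)| ≤ 1 := hper (n - τ)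
    rw [show n - τ + τ = n by ring] at h1
    have h2 : n - τ ∈ Finset.Icc (-K) K := by
      rw [Finset.mem_Icc]
      have : |n - τ| ≤ K := by rwa [abs_sub_comm] at hτ
      constructor <;> [linarith [neg_abs_le (n - τ)]; linarith [le_abs_self (n - τ)]]
    have h3 : |f (n - τ)| ≤ M := Finset.le_sup' (fun j => |f j|) h2
    have h4 := abs_add_le (f n - f (n - τ)) (f (n - τ))
    rw [sub_add_cancel] at h4
    linarith [h1, h3, h4]

noncomputable def Af (f : ℤ → ℝ) (a : ℤ) (n : ℕ) : ℝ := ∑ k ∈ Finset.Ico a (a + (n : ℤ)), f k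

lemma sum_Ico_consec (f : ℤ → ℝ) {a b c : ℤ} (hab : a ≤ b) (hbc : b ≤ c) :
    ∑ k ∈ Finset.Ico a b, f k + ∑ k ∈ Finset.Ico b c, f k = ∑ k ∈ Finset.Ico a c, f k := by
  rw [← Finset.Ico_union_Ico_eq_Ico hab hbc,
    Finset.sum_union (Finset.Ico_disjoint_Ico_consecutive a b c)]

lemma Af_consec (f : ℤ → ℝ) (a : ℤ) (m n : ℕ) :
    Af f a (m + n) = Af f a m + Af f (a + m) n := by
  unfold Af
  push_cast
  rw [show a + ((m:ℤ) + n) = a + (m:ℤ) + n by ring]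
  exact (sum_Ico_consec f (by omega) (by omega)).symm

lemma Af_shift (f : ℤ → ℝ) (a τ : ℤ) (n : ℕ) :
    Af f (a + τ) n = ∑ k ∈ Finset.Ico a (a + (n : ℤ)), f (k + τ) := by
  unfold Af
  rw [show a + τ + (n:ℤ) = (a + n) + τ by ring, ← Finset.map_add_right_Ico, Finset.sum_map]
  rfl

lemma card_Ico_int (a : ℤ) (n : ℕ) : (Finset.Ico a (a + (n:ℤ))).card = n := by
  rw [Int.card_Ico]; omega

lemma Af_shift_bound {f : ℤ → ℝ} {ε : ℝ} {τ : ℤ} (hτ : ∀ n, |f (n + τ) - f n| ≤ ε)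
    (a : ℤ) (n : ℕ) : |Af f (a + τ) n - Af f a n| ≤ n * ε := by
  rw [Af_shift]
  unfold Af
  rw [← Finset.sum_sub_distrib]
  calc |∑ k ∈ Finset.Ico a (a + (n:ℤ)), (f (k + τ) - f k)|
      ≤ ∑ k ∈ Finset.Ico a (a + (n:ℤ)), |f (k + τ) - f k| := Finset.abs_sum_le_sum_abs _ _
    _ ≤ ∑ _k ∈ Finset.Ico a (a + (n:ℤ)), ε := Finset.sum_le_sum (fun k _ => hτ k)
    _ = n * ε := by rw [Finset.sum_const, card_Ico_int]; ring

lemma sum_abs_le {f : ℤ → ℝ} {C : ℝ} (hC : ∀ n, |f n| ≤ C) (a b : ℤ) (h : a ≤ b) :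
    |∑ k ∈ Finset.Ico a b, f k| ≤ (b - a) * C := by
  calc |∑ k ∈ Finset.Ico a b, f k| ≤ ∑ k ∈ Finset.Ico a b, |f k| := Finset.abs_sum_le_sum_abs _ _
    _ ≤ ∑ _k ∈ Finset.Ico a b, C := Finset.sum_le_sum (fun k _ => hC k)
    _ = (b - a) * C := by rw [Finset.sum_const, Int.card_Ico, nsmul_eq_mul]; rw [show ((b - a).toNat : ℝ) = ((b - a : ℤ) : ℝ) by exact_mod_cast congrArg (fun z : ℤ => (z : ℝ)) (Int.toNat_of_nonneg (by omega : (0:ℤ) ≤ b - a))]; push_cast; ring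

lemma Af_translate_le {f : ℤ → ℝ} {C : ℝ} (hC : ∀ n, |f n| ≤ C) {a b : ℤ} (h : a ≤ b) (n : ℕ) :
    |Af f a n - Af f b n| ≤ |a - b| * (2 * C) := by
    have key : Af f a n - Af f b n
        = ∑ k ∈ Finset.Ico a b, f k - ∑ k ∈ Finset.Ico (a + (n:ℤ)) (b + (n:ℤ)), f k := by
      unfold Af
      have h1 := sum_Ico_consec f (show a ≤ a + (n:ℤ) by omega) (show a + (n:ℤ) ≤ b + n by omega)
      have h2 := sum_Ico_consec f h (show b ≤ b + (n:ℤ) by omega)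
      linarith
    have b1 := sum_abs_le hC a b h
    have b2 := sum_abs_le hC (a + (n:ℤ)) (b + (n:ℤ)) (by omega)
    rw [key, show |a - b| = b - a by rw [abs_sub_comm]; exact abs_of_nonneg (by omega)]
    have h3 := abs_sub (∑ k ∈ Finset.Ico a b, f k) (∑ k ∈ Finset.Ico (a + (n:ℤ)) (b + (n:ℤ)), f k)
    push_cast at b1 b2 ⊢
    linarith

lemma Af_translate {f : ℤ → ℝ} {C : ℝ} (hC : ∀ n, |f n| ≤ C) (a b : ℤ) (n : ℕ) :
    |Af f a n - Af f b n| ≤ |a - b| * (2 * C) := by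
  rcases le_total a b with h | h
  · exact Af_translate_le hC h n
  · have := Af_translate_le hC h n
    rwa [abs_sub_comm (Af f b n), abs_sub_comm b a] at this

lemma E1 {f : ℤ → ℝ} {ε : ℝ} {K : ℤ} {C : ℝ} (hC0 : 0 ≤ C) (hC : ∀ n, |f n| ≤ C)
    (hap : ∀ a : ℤ, ∃ τ : ℤ, |τ - a| ≤ K ∧ ∀ n, |f (n + τ) - f n| ≤ ε) (a b : ℤ) (n : ℕ) :
    |Af f a n - Af f b n| ≤ n * ε + K * (2 * C) := by
  obtain ⟨τ, hτ, hper⟩ := hap (b - a)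
  have h1 : |Af f (a + τ) n - Af f a n| ≤ n * ε := Af_shift_bound hper a n
  have h2 : |Af f (a + τ) n - Af f b n| ≤ |a + τ - b| * (2 * C) := Af_translate hC (a + τ) b n
  have h3 : |a + τ - b| ≤ K := by rw [show a + τ - b = τ - (b - a) by ring]; exact hτ
  have h4 : ((|a + τ - b| : ℤ) : ℝ) * (2 * C) ≤ (K : ℝ) * (2 * C) := by
    apply mul_le_mul_of_nonneg_right _ (by linarith)
    exact_mod_cast h3
  have h5 := abs_sub_le (Af f a n) (Af f (a + τ) n) (Af f b n)
  rw [abs_sub_comm (Af f a n) (Af f (a + τ) n)] at h5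
  linarith

lemma E2 {f : ℤ → ℝ} {n : ℕ} {B : ℝ} (hB : ∀ a : ℤ, |Af f a n - Af f 0 n| ≤ B) :
    ∀ q : ℕ, |Af f 0 (q * n) - q * Af f 0 n| ≤ q * B := by
  intro q
  induction q with
  | zero => simp [Af]
  | succ q ih =>
    have hc : Af f 0 ((q + 1) * n) = Af f 0 (q * n) + Af f ((0:ℤ) + ((q * n : ℕ) : ℤ)) n := by
      rw [show (q + 1) * n = q * n + n by ring]
      exact Af_consec f 0 (q * n) n
    have h2 := hB ((0:ℤ) + ((q * n : ℕ) : ℤ))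
    have key : Af f 0 ((q + 1) * n) - ((q + 1 : ℕ) : ℝ) * Af f 0 n
        = (Af f 0 (q * n) - q * Af f 0 n) + (Af f ((0:ℤ) + ((q * n : ℕ) : ℤ)) n - Af f 0 n) := by
      rw [hc]; push_cast; ring
    rw [key]
    have habs := abs_add_le (Af f 0 (q * n) - q * Af f 0 n)
      (Af f ((0:ℤ) + ((q * n : ℕ) : ℤ)) n - Af f 0 n)
    have hcast : ((q + 1 : ℕ) : ℝ) * B = (q : ℝ) * B + B := by push_cast; ring
    rw [hcast]
    linarith

lemma mean_close {f : ℤ → ℝ} {ε : ℝ} {K : ℤ} {C : ℝ} (hC0 : 0 ≤ C) (hC : ∀ n, |f n| ≤ C)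
    (hap : ∀ a : ℤ, ∃ τ : ℤ, |τ - a| ≤ K ∧ ∀ n, |f (n + τ) - f n| ≤ ε)
    {N q : ℕ} (hN : 1 ≤ N) (hq : 1 ≤ q) :
    |Af f 0 (q * N) / ((q * N : ℕ) : ℝ) - Af f 0 N / (N : ℝ)| ≤ ε + (K : ℝ) * (2 * C) / N := by
  have hB : ∀ a : ℤ, |Af f a N - Af f 0 N| ≤ N * ε + K * (2 * C) := fun a => E1 hC0 hC hap a 0 N
  have h2 := E2 hB q
  have hNpos : (0 : ℝ) < N := by exact_mod_cast hN
  have hqpos : (0 : ℝ) < q := by exact_mod_cast hq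
  have key : Af f 0 (q * N) / ((q * N : ℕ) : ℝ) - Af f 0 N / (N : ℝ)
      = (Af f 0 (q * N) - q * Af f 0 N) / ((q : ℝ) * N) := by
    push_cast
    field_simp
  rw [key, abs_div, abs_of_pos (by positivity : (0 : ℝ) < (q : ℝ) * N),
    div_le_iff₀ (by positivity)]
  have hr : (ε + (K : ℝ) * (2 * C) / N) * ((q : ℝ) * N) = q * ((N : ℝ) * ε + K * (2 * C)) := by
    field_simp
  rw [hr]
  exact h2

/-- A nonnegative almost periodic sequence on ℤ which is not identically zero
has strictly positive mean value. -/
theorem stmt_3 (f : ℤ → ℝ) (hf : AlmostPeriodicSeqR f)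
    (hpos : ∀ n, 0 ≤ f n) (n₀ : ℤ) (hn₀ : 0 < f n₀) :
    ∃ μ : ℝ, 0 < μ ∧ Filter.Tendsto
      (fun N : ℕ => (2 * (N : ℝ) + 1)⁻¹ * ∑ k ∈ Finset.Icc (-(N : ℤ)) (N : ℤ), f k)
      Filter.atTop (nhds μ) := by
  classical
  obtain ⟨K1, hK1, hap1⟩ := ap_of_compact hf one_pos
  obtain ⟨C, hC0, hC⟩ := bdd_of_ap hK1 hap1
  set m : ℕ → ℝ := fun n => Af f 0 n / n with hm
  have key : ∀ δ : ℝ, 0 < δ → ∃ N₀ : ℕ, 1 ≤ N₀ ∧ ∀ n, N₀ ≤ n → ∀ n', N₀ ≤ n' →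
      |m n - m n'| < δ := by
    intro δ hδ
    obtain ⟨K, hK, hap⟩ := ap_of_compact hf (show (0:ℝ) < δ/8 by linarith)
    obtain ⟨N₁, hN₁⟩ := exists_nat_gt ((K : ℝ) * (2 * C) / (δ/8))
    refine ⟨N₁ + 1, le_add_self, fun n hn n' hn' => ?_⟩
    have hn1 : 1 ≤ n := le_trans (Nat.le_add_left 1 N₁) hn
    have hn'1 : 1 ≤ n' := le_trans (Nat.le_add_left 1 N₁) hn'
    have hKC : 0 ≤ (K : ℝ) * (2 * C) := by
      have : (0:ℝ) ≤ (K:ℝ) := by exact_mod_cast hK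
      positivity
    have bound : ∀ p : ℕ, N₁ + 1 ≤ p → (K : ℝ) * (2 * C) / p ≤ δ / 8 := by
      intro p hp
      have hp0 : (0:ℝ) < p := by
        have : 1 ≤ p := le_trans (Nat.le_add_left 1 N₁) hp
        exact_mod_cast this
      rw [div_le_iff₀ hp0]
      have hcast : ((K : ℝ) * (2 * C)) / (δ/8) < (p : ℝ) := by
        have : (N₁ : ℝ) < p := by exact_mod_cast (by omega : N₁ < p)
        linarith
      rw [div_lt_iff₀ (by linarith : (0:ℝ) < δ/8)] at hcast
      linarith
    have h1 := mean_close hC0 hC hap hn1 hn'1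
    have h2 := mean_close hC0 hC hap hn'1 hn1
    rw [show n * n' = n' * n by ring] at h2
    have e1 : |m (n' * n) - m n| ≤ δ/8 + (K:ℝ)*(2*C)/n := by
      simpa [hm] using h1
    have e2 : |m (n' * n) - m n'| ≤ δ/8 + (K:ℝ)*(2*C)/n' := by
      simpa [hm] using h2
    have b1 := bound n hn
    have b2 := bound n' hn'
    have htri := abs_sub_le (m n) (m (n' * n)) (m n')
    rw [abs_sub_comm (m n) (m (n' * n))] at htri
    calc |m n - m n'| ≤ |m (n' * n) - m n| + |m (n' * n) - m n'| := htri
      _ ≤ (δ/8 + (K:ℝ)*(2*C)/n) + (δ/8 + (K:ℝ)*(2*C)/n') := by linarith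
      _ ≤ δ/8 + δ/8 + (δ/8 + δ/8) := by linarith
      _ < δ := by linarith
  have hcauchy : CauchySeq m := by
    rw [Metric.cauchySeq_iff]
    intro δ hδ
    obtain ⟨N₀, _, h⟩ := key δ hδ
    exact ⟨N₀, fun n hn n' hn' => by rw [Real.dist_eq]; exact h n hn n' hn'⟩
  obtain ⟨μ, hμ⟩ := cauchySeq_tendsto_of_complete hcauchy
  have hSm : ∀ N : ℕ, (2 * (N : ℝ) + 1)⁻¹ * ∑ k ∈ Finset.Icc (-(N : ℤ)) (N : ℤ), f k
      = Af f (-(N : ℤ)) (2 * N + 1) / ((2 * N + 1 : ℕ) : ℝ) := by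
    intro N
    have hset : Finset.Ico (-(N:ℤ)) (-(N:ℤ) + ((2*N+1 : ℕ) : ℤ)) = Finset.Icc (-(N:ℤ)) (N:ℤ) := by
      ext k
      simp only [Finset.mem_Ico, Finset.mem_Icc]
      push_cast
      omega
    rw [Af, hset]
    push_cast
    rw [inv_mul_eq_div]
  refine ⟨μ, ?_, ?_⟩
  · -- positivity
    obtain ⟨K, hK, hap⟩ := ap_of_compact hf (half_pos hn₀)
    set W : ℕ := (2 * K + 1).toNat with hWdef
    have hW : (W : ℤ) = 2 * K + 1 := Int.toNat_of_nonneg (by omega)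
    have hW1 : 1 ≤ W := by omega
    have hblock : ∀ a : ℤ, f n₀ / 2 ≤ Af f a W := by
      intro a
      obtain ⟨τ, hτ, hper⟩ := hap (a + K - n₀)
      have habs := abs_le.mp hτ
      have hmem : n₀ + τ ∈ Finset.Ico a (a + (W : ℤ)) := by
        rw [Finset.mem_Ico, hW]
        omega
      have hval := abs_le.mp (hper n₀)
      have h1 : f n₀ / 2 ≤ f (n₀ + τ) := by linarith [hval.1]
      exact le_trans h1 (Finset.single_le_sum (fun i _ => hpos i) hmem)
    have hqsum : ∀ q : ℕ, (q : ℝ) * (f n₀ / 2) ≤ Af f 0 (q * W) := by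
      intro q
      induction q with
      | zero => simp [Af]
      | succ q ih =>
        rw [show (q + 1) * W = q * W + W by ring, Af_consec]
        have hb := hblock ((0:ℤ) + ((q * W : ℕ) : ℤ))
        have hcast : ((q + 1 : ℕ) : ℝ) * (f n₀ / 2) = (q : ℝ) * (f n₀ / 2) + f n₀ / 2 := by
          push_cast; ring
        rw [hcast]
        linarith
    have hWpos : (0:ℝ) < (W : ℝ) := by exact_mod_cast hW1
    have hsub : Filter.Tendsto (fun q : ℕ => m ((q + 1) * W)) Filter.atTop (nhds μ) := by
      apply hμ.comp
      apply Filter.tendsto_atTop_mono (f := id) (fun q => ?_) Filter.tendsto_id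
      calc q ≤ (q + 1) * 1 := by omega
        _ ≤ (q + 1) * W := Nat.mul_le_mul_left _ hW1
    have hlow : ∀ q : ℕ, f n₀ / 2 / W ≤ m ((q + 1) * W) := by
      intro q
      have h := hqsum (q + 1)
      have hden : (0:ℝ) < (((q + 1) * W : ℕ) : ℝ) := by
        exact_mod_cast Nat.mul_pos (Nat.succ_pos q) (by omega : 0 < W)
      have heq : f n₀ / 2 / (W : ℝ) = ((q + 1 : ℕ) : ℝ) * (f n₀ / 2) / (((q + 1) * W : ℕ) : ℝ) := by
        push_cast
        field_simp
      rw [heq]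
      exact (div_le_div_iff_of_pos_right hden).mpr h
    have hμlow : f n₀ / 2 / W ≤ μ := ge_of_tendsto' hsub hlow
    have : (0:ℝ) < f n₀ / 2 / W := by positivity
    linarith
  · -- convergence
    rw [Metric.tendsto_atTop]
    intro δ hδ
    obtain ⟨K, hK, hap⟩ := ap_of_compact hf (show (0:ℝ) < δ/4 by linarith)
    have hKC : 0 ≤ (K : ℝ) * (2 * C) := by
      have : (0:ℝ) ≤ (K:ℝ) := by exact_mod_cast hK
      positivity
    have hsub : Filter.Tendsto (fun N : ℕ => m (2 * N + 1)) Filter.atTop (nhds μ) := by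
      apply hμ.comp
      exact Filter.tendsto_atTop_mono (f := id) (fun n => by simp only [id_eq]; omega) Filter.tendsto_id
    rw [Metric.tendsto_atTop] at hsub
    obtain ⟨N₁, hN₁⟩ := hsub (δ/4) (by linarith)
    obtain ⟨N₂, hN₂⟩ := exists_nat_gt ((K : ℝ) * (2 * C) / (δ/4))
    refine ⟨max N₁ N₂, fun N hN => ?_⟩
    have e1 := E1 hC0 hC hap (-(N:ℤ)) 0 (2 * N + 1)
    have hden : (0:ℝ) < ((2 * N + 1 : ℕ) : ℝ) := by exact_mod_cast Nat.succ_pos (2 * N)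
    rw [Real.dist_eq, hSm N]
    have hdiff : Af f (-(N:ℤ)) (2 * N + 1) / ((2 * N + 1 : ℕ) : ℝ) - μ
        = (Af f (-(N:ℤ)) (2 * N + 1) - Af f 0 (2 * N + 1)) / ((2 * N + 1 : ℕ) : ℝ)
          + (m (2 * N + 1) - μ) := by
      simp only [hm]
      ring
    rw [hdiff]
    have h2 : |(Af f (-(N:ℤ)) (2 * N + 1) - Af f 0 (2 * N + 1)) / ((2 * N + 1 : ℕ) : ℝ)|
        ≤ δ/4 + (K : ℝ) * (2 * C) / ((2 * N + 1 : ℕ) : ℝ) := by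
      rw [abs_div, abs_of_pos hden, div_le_iff₀ hden]
      have hr : (δ/4 + (K : ℝ) * (2 * C) / ((2 * N + 1 : ℕ) : ℝ)) * ((2 * N + 1 : ℕ) : ℝ)
          = ((2 * N + 1 : ℕ) : ℝ) * (δ/4) + (K : ℝ) * (2 * C) := by
        field_simp
      rw [hr]
      exact e1
    have h3 : (K : ℝ) * (2 * C) / ((2 * N + 1 : ℕ) : ℝ) < δ/4 := by
      have hle : N₂ ≤ 2 * N + 1 := by
        have : N₂ ≤ N := le_trans (le_max_right _ _) hN
        omega
      have hN2 : (N₂ : ℝ) ≤ ((2 * N + 1 : ℕ) : ℝ) := by exact_mod_cast hle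
      have hlt : (K : ℝ) * (2 * C) / (δ/4) < ((2 * N + 1 : ℕ) : ℝ) := lt_of_lt_of_le hN₂ hN2
      rw [div_lt_iff₀ (by linarith : (0:ℝ) < δ/4)] at hlt
      rw [div_lt_iff₀ hden]
      linarith
    have h4 := hN₁ N (le_trans (le_max_left _ _) hN)
    rw [Real.dist_eq] at h4
    calc |(Af f (-(N:ℤ)) (2 * N + 1) - Af f 0 (2 * N + 1)) / ((2 * N + 1 : ℕ) : ℝ)
          + (m (2 * N + 1) - μ)|
        ≤ |(Af f (-(N:ℤ)) (2 * N + 1) - Af f 0 (2 * N + 1)) / ((2 * N + 1 : ℕ) : ℝ)|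
          + |m (2 * N + 1) - μ| := abs_add_le _ _
      _ < δ := by linarith
end
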